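/- In the setting of the main theorem (μ = ν^ℤ product, f local mean-zero with ‖f‖² = ∑_z ⟨f, τ_z f⟩ = 0, f depending on coordinates in {−s_f,…,s_f}), the function g with f = τg − g constructed via the Fourier expansion satisfies the bound ⟨g²⟩ ≤ (2s_f + 1)² ⟨f²⟩. -/

import Mathlib

open MeasureTheory ProbabilityTheory

/-- A function on `X^ℤ` is local if it depends only on finitely many coordinates. -/
def IsLocal {X : Type*} (f : (ℤ → X) → ℝ) : Prop :=
  ∃ S : Finset ℤ, ∀ η η' : ℤ → X, (∀ x ∈ S, η x = η' x) → f η = f η'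

/-- `f` depends only on the coordinates in the window `{-s, …, s}`. -/
def DependsOnWindow {X : Type*} (s : ℕ) (f : (ℤ → X) → ℝ) : Prop :=
  ∀ η η' : ℤ → X, (∀ x : ℤ, |x| ≤ (s : ℤ) → η x = η' x) → f η = f η'

/-- `μ` is the i.i.d. product measure `ν^ℤ` on `X^ℤ`. -/
def IsIIDProduct {X : Type*} [MeasurableSpace X] (ν : Measure X)
    (μ : Measure (ℤ → X)) : Prop :=
  iIndepFun (m := fun _ : ℤ => (inferInstance : MeasurableSpace X)) (fun x η => η x) μ ∧
  ∀ x : ℤ, μ.map (fun η => η x) = ν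

section Infra

variable {X : Type*} [MeasurableSpace X] {ν : Measure X} [IsProbabilityMeasure ν]
  {μ : Measure (ℤ → X)} [IsProbabilityMeasure μ]

/-- the shift `T z η x = η (x + z)`. -/
def Tsh {X : Type*} (z : ℤ) (η : ℤ → X) : ℤ → X := fun x => η (x + z)

lemma measurable_Tsh (z : ℤ) : Measurable (Tsh (X := X) z) :=
  measurable_pi_lambda _ fun x => measurable_pi_apply (x + z)

/-- combine two configurations on `I` and `Iᶜ`. -/
noncomputable def Cc {X : Type*} (I : Set ℤ) (η ζ : ℤ → X) : ℤ → X :=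
  fun x => @ite _ (x ∈ I) (Classical.propDecidable _) (η x) (ζ x)

lemma Cc_mem {I : Set ℤ} {η ζ : ℤ → X} {x : ℤ} (hx : x ∈ I) : Cc I η ζ x = η x := by
  simp [Cc, hx]

lemma Cc_not_mem {I : Set ℤ} {η ζ : ℤ → X} {x : ℤ} (hx : x ∉ I) : Cc I η ζ x = ζ x := by
  simp [Cc, hx]

lemma measurable_Cc (I : Set ℤ) :
    Measurable (fun p : (ℤ → X) × (ℤ → X) => Cc I p.1 p.2) := by
  apply measurable_pi_lambda
  intro x
  by_cases hx : x ∈ I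
  · simp only [Cc_mem hx]
    exact measurable_fst.eval
  · simp only [Cc_not_mem hx]
    exact measurable_snd.eval

lemma rect (hμ : IsIIDProduct ν μ) (S : Finset ℤ) (A : ℤ → Set X)
    (hA : ∀ i, MeasurableSet (A i)) :
    μ (⋂ i ∈ S, (fun η : ℤ → X => η i) ⁻¹' A i) = ∏ i ∈ S, ν (A i) := by
  rw [hμ.1.measure_inter_preimage_eq_mul S (fun i _ => hA i)]
  refine Finset.prod_congr rfl fun i _ => ?_
  rw [← hμ.2 i, Measure.map_apply (measurable_pi_apply i) (hA i)]

/-- a probability measure with the iid rectangle probabilities equals `μ`. -/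
lemma unique (hμ : IsIIDProduct ν μ) (κ : Measure (ℤ → X)) [IsProbabilityMeasure κ]
    (h : ∀ (S : Finset ℤ) (A : ℤ → Set X), (∀ i, MeasurableSet (A i)) →
      κ (⋂ i ∈ S, (fun η : ℤ → X => η i) ⁻¹' A i) = ∏ i ∈ S, ν (A i)) :
    κ = μ := by
  refine ext_of_generate_finite (measurableCylinders fun _ : ℤ => X)
    generateFrom_measurableCylinders.symm isPiSystem_measurableCylinders ?_ (by simp)
  intro t ht
  obtain ⟨S, B, hB, rfl⟩ := (mem_measurableCylinders t).mp ht
  have hres : Measurable (fun η : ℤ → X => fun i : S => η i) :=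
    measurable_pi_lambda _ fun i => measurable_pi_apply (i : ℤ)
  have key : ∀ (κ' : Measure (ℤ → X)), IsProbabilityMeasure κ' →
      (∀ (S' : Finset ℤ) (A : ℤ → Set X), (∀ i, MeasurableSet (A i)) →
        κ' (⋂ i ∈ S', (fun η : ℤ → X => η i) ⁻¹' A i) = ∏ i ∈ S', ν (A i)) →
      κ'.map (fun η : ℤ → X => fun i : S => η i) = Measure.pi (fun _ : S => ν) := by
    intro κ' hκ' h'
    refine (Measure.pi_eq fun A hA => ?_).symm
    rw [Measure.map_apply hres (MeasurableSet.univ_pi hA)]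
    classical
    have hset : (fun η : ℤ → X => fun i : S => η i) ⁻¹' Set.pi Set.univ A =
        ⋂ i ∈ S, (fun η : ℤ → X => η i) ⁻¹'
          (fun j : ℤ => if hj : j ∈ S then A ⟨j, hj⟩ else Set.univ) i := by
      ext η
      simp only [Set.mem_preimage, Set.mem_pi, Set.mem_univ, forall_true_left,
        Set.mem_iInter]
      constructor
      · intro hη i hi
        simp only [hi, dif_pos]
        exact hη ⟨i, hi⟩
      · intro hη ⟨i, hi⟩
        have := hη i hi
        simpa [hi] using this
    rw [hset, h' S _ (fun i => by by_cases hi : i ∈ S <;> simp [hi, hA])]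
    rw [← Finset.prod_coe_sort S (fun j => ν (if hj : j ∈ S then A ⟨j, hj⟩ else Set.univ))]
    refine Finset.prod_congr rfl fun i _ => ?_
    simp [i.2]
  have h1 := key κ ‹_› h
  have h2 := key μ ‹_› (rect hμ)
  have hc : cylinder S B = (fun η : ℤ → X => fun i : S => η i) ⁻¹' B := rfl
  rw [hc, ← Measure.map_apply hres hB, ← Measure.map_apply hres hB, h1, h2]

lemma map_shift (hμ : IsIIDProduct ν μ) (z : ℤ) : μ.map (Tsh z : (ℤ → X) → ℤ → X) = μ := by
  have : IsProbabilityMeasure (μ.map (Tsh z : (ℤ → X) → ℤ → X)) :=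
    Measure.isProbabilityMeasure_map (measurable_Tsh z).aemeasurable
  refine unique hμ _ fun S A hA => ?_
  rw [Measure.map_apply (measurable_Tsh z)
    (Finset.measurableSet_biInter _ (fun i _ => measurable_pi_apply i (hA i)))]
  classical
  have hset : (Tsh z : (ℤ → X) → ℤ → X) ⁻¹' (⋂ i ∈ S, (fun η : ℤ → X => η i) ⁻¹' A i) =
      ⋂ j ∈ S.image (· + z), (fun η : ℤ → X => η j) ⁻¹' A (j - z) := by
    ext η
    simp only [Set.mem_preimage, Set.mem_iInter, Finset.mem_image]
    constructor
    · rintro hη j ⟨i, hi, rfl⟩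
      simpa [Tsh] using hη i hi
    · intro hη i hi
      have := hη (i + z) ⟨i, hi, rfl⟩
      simpa [Tsh] using this
  rw [hset, rect hμ _ _ (fun j => hA (j - z)),
    Finset.prod_image (fun a _ b _ h => by omega)]
  exact Finset.prod_congr rfl fun i _ => by simp

lemma map_combine (hμ : IsIIDProduct ν μ) (I : Set ℤ) :
    (μ.prod μ).map (fun p : (ℤ → X) × (ℤ → X) => Cc I p.1 p.2) = μ := by
  have : IsProbabilityMeasure ((μ.prod μ).map
      (fun p : (ℤ → X) × (ℤ → X) => Cc I p.1 p.2)) :=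
    Measure.isProbabilityMeasure_map (measurable_Cc I).aemeasurable
  refine unique hμ _ fun S A hA => ?_
  rw [Measure.map_apply (measurable_Cc I)
    (Finset.measurableSet_biInter _ (fun i _ => measurable_pi_apply i (hA i)))]
  classical
  have hset : (fun p : (ℤ → X) × (ℤ → X) => Cc I p.1 p.2) ⁻¹'
      (⋂ i ∈ S, (fun η : ℤ → X => η i) ⁻¹' A i) =
      (⋂ i ∈ S.filter (· ∈ I), (fun η : ℤ → X => η i) ⁻¹' A i) ×ˢ
      (⋂ i ∈ S.filter (fun i => i ∉ I), (fun η : ℤ → X => η i) ⁻¹' A i) := by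
    ext p
    simp only [Set.mem_preimage, Set.mem_iInter, Set.mem_prod, Finset.mem_filter]
    constructor
    · intro hp
      constructor
      · rintro i ⟨hi, hiI⟩
        have := hp i hi; rwa [Cc_mem hiI] at this
      · rintro i ⟨hi, hiI⟩
        have := hp i hi; rwa [Cc_not_mem hiI] at this
    · rintro ⟨h1, h2⟩ i hi
      by_cases hiI : i ∈ I
      · rw [Cc_mem hiI]; exact h1 i ⟨hi, hiI⟩
      · rw [Cc_not_mem hiI]; exact h2 i ⟨hi, hiI⟩
  rw [hset, Measure.prod_prod, rect hμ _ _ hA, rect hμ _ _ hA,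
    Finset.prod_filter_mul_prod_filter_not]

/-- the coordinates a function depends on. -/
def DOn {X : Type*} (h : (ℤ → X) → ℝ) (D : Set ℤ) : Prop :=
  ∀ η η' : ℤ → X, (∀ x ∈ D, η x = η' x) → h η = h η'

/-- integrate out the coordinates outside `I`. -/
noncomputable def Pop {X : Type*} [MeasurableSpace X] (μ : Measure (ℤ → X)) (I : Set ℤ)
    (h : (ℤ → X) → ℝ) (η : ℤ → X) : ℝ := ∫ ζ, h (Cc I η ζ) ∂μ

lemma Cc_agree {I : Set ℤ} {η ζ : ℤ → X} : ∀ x ∈ I, Cc I η ζ x = η x :=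
  fun _ hx => Cc_mem hx

lemma Pop_eq_self {I : Set ℤ} {h : (ℤ → X) → ℝ} (hD : DOn h I) : Pop μ I h = h := by
  funext η
  have : ∀ ζ, h (Cc I η ζ) = h η := fun ζ => hD _ _ Cc_agree
  simp [Pop, this]

lemma DOn_Pop (I : Set ℤ) (h : (ℤ → X) → ℝ) : DOn (Pop μ I h) I := by
  intro η η' hagree
  have : ∀ ζ, Cc I η ζ = Cc I η' ζ := by
    intro ζ; funext x
    by_cases hx : x ∈ I
    · rw [Cc_mem hx, Cc_mem hx]; exact hagree x hx
    · rw [Cc_not_mem hx, Cc_not_mem hx]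
  simp only [Pop]
  exact integral_congr_ae (Filter.EventuallyEq.of_eq (by funext ζ; rw [this ζ]))

lemma Pop_congr {I J D : Set ℤ} {h : (ℤ → X) → ℝ} (hD : DOn h D)
    (hIJ : I ∩ D = J ∩ D) : Pop μ I h = Pop μ J h := by
  funext η
  refine integral_congr_ae (Filter.EventuallyEq.of_eq ?_)
  funext ζ
  refine hD _ _ fun x hx => ?_
  have hiff : x ∈ I ↔ x ∈ J := by
    constructor
    · intro hxI; have : x ∈ J ∩ D := hIJ ▸ Set.mem_inter hxI hx; exact this.1
    · intro hxJ; have : x ∈ I ∩ D := hIJ.symm ▸ Set.mem_inter hxJ hx; exact this.1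
  by_cases hxI : x ∈ I
  · rw [Cc_mem hxI, Cc_mem (hiff.mp hxI)]
  · rw [Cc_not_mem hxI, Cc_not_mem (fun hc => hxI (hiff.mpr hc))]

lemma Pop_empty (h : (ℤ → X) → ℝ) : Pop μ (∅ : Set ℤ) h = fun _ => ∫ ζ, h ζ ∂μ := by
  funext η
  simp only [Pop]
  congr 1
  funext ζ
  congr 1
  funext x
  exact Cc_not_mem (by simp)

/-- vanishing: if `h` depends on `D` and `I ∩ D = ∅` then `Pop I h` is the constant `∫ h`. -/
lemma Pop_vanish {I D : Set ℤ} {h : (ℤ → X) → ℝ} (hD : DOn h D) (hID : I ∩ D = ∅) :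
    Pop μ I h = fun _ => ∫ ζ, h ζ ∂μ := by
  rw [Pop_congr hD (J := ∅) (by simp [hID]), Pop_empty]

lemma measurable_Cc_right (I : Set ℤ) (η : ℤ → X) :
    Measurable (fun ζ : ℤ → X => Cc I η ζ) :=
  (measurable_Cc I).comp (measurable_const.prodMk measurable_id)

lemma stronglyMeasurable_Pop {I : Set ℤ} {h : (ℤ → X) → ℝ} (hm : Measurable h) :
    StronglyMeasurable (Pop μ I h) := by
  have : StronglyMeasurable (fun p : (ℤ → X) × (ℤ → X) => h (Cc I p.1 p.2)) :=
    (hm.comp (measurable_Cc I)).stronglyMeasurable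
  exact this.integral_prod_right'

lemma integrable_mul_of_L2 {α : Type*} [MeasurableSpace α] {m : Measure α}
    {u v : α → ℝ} (hu : MemLp u 2 m) (hv : MemLp v 2 m) :
    Integrable (fun x => u x * v x) m := by
  have hu2 : Integrable (fun x => u x ^ 2) m := (memLp_two_iff_integrable_sq hu.1).mp hu
  have hv2 : Integrable (fun x => v x ^ 2) m := (memLp_two_iff_integrable_sq hv.1).mp hv
  refine Integrable.mono' ((hu2.add hv2).div_const 2) (hu.1.mul hv.1) ?_
  filter_upwards with x
  rw [Real.norm_eq_abs, abs_mul]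
  show |u x| * |v x| ≤ (u x ^ 2 + v x ^ 2) / 2
  nlinarith [sq_nonneg (|u x| - |v x|), abs_mul_abs_self (u x), abs_mul_abs_self (v x),
    abs_nonneg (u x), abs_nonneg (v x)]

lemma jensen_sq {α : Type*} [MeasurableSpace α] {m : Measure α} [IsProbabilityMeasure m]
    {u : α → ℝ} (hu : MemLp u 2 m) : (∫ x, u x ∂m) ^ 2 ≤ ∫ x, u x ^ 2 ∂m := by
  have hInt : Integrable u m := hu.integrable one_le_two
  have hInt2 : Integrable (fun x => u x ^ 2) m := (memLp_two_iff_integrable_sq hu.1).mp hu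
  set c := ∫ x, u x ∂m with hc
  have h0 : (0:ℝ) ≤ ∫ x, (u x - c) ^ 2 ∂m := integral_nonneg fun x => sq_nonneg _
  have hexp : ∫ x, (u x - c) ^ 2 ∂m = (∫ x, u x ^ 2 ∂m) - c ^ 2 := by
    have h1 : (fun x => (u x - c) ^ 2) = fun x => (u x ^ 2 - 2 * c * u x) + c ^ 2 := by
      funext x; ring
    have i1 : Integrable (fun x => u x ^ 2 - 2 * c * u x) m :=
      hInt2.sub (hInt.const_mul (2 * c))
    rw [h1, integral_add i1 (integrable_const _),
      integral_sub hInt2 (hInt.const_mul (2 * c)), integral_const_mul, integral_const]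
    simp only [measure_univ, ENNReal.toReal_one, probReal_univ, smul_eq_mul, one_mul, ← hc]
    ring
  linarith [hexp ▸ h0]

lemma integrable_comp_combine (hμ : IsIIDProduct ν μ) (I : Set ℤ) {u : (ℤ → X) → ℝ}
    (hum : AEStronglyMeasurable u μ) (hu : Integrable u μ) :
    Integrable (fun p : (ℤ → X) × (ℤ → X) => u (Cc I p.1 p.2)) (μ.prod μ) := by
  have := (integrable_map_measure (f := fun p : (ℤ → X) × (ℤ → X) => Cc I p.1 p.2)
    (g := u) (by rw [map_combine hμ I]; exact hum) (measurable_Cc I).aemeasurable).mp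
  rw [map_combine hμ I] at this
  exact this hu

/-- `Pop` is an `L²` contraction. -/
lemma Pop_L2 (hμ : IsIIDProduct ν μ) (I : Set ℤ) {h : (ℤ → X) → ℝ}
    (hm : Measurable h) (h2 : MemLp h 2 μ) :
    MemLp (Pop μ I h) 2 μ ∧ ∫ η, (Pop μ I h η) ^ 2 ∂μ ≤ ∫ η, h η ^ 2 ∂μ := by
  have hsq : Integrable (fun η => h η ^ 2) μ := (memLp_two_iff_integrable_sq h2.1).mp h2
  have hsqc : Integrable (fun p : (ℤ → X) × (ℤ → X) => h (Cc I p.1 p.2) ^ 2) (μ.prod μ) :=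
    integrable_comp_combine hμ I (hm.pow_const 2).aestronglyMeasurable hsq
  set J := fun η => ∫ ζ, h (Cc I η ζ) ^ 2 ∂μ with hJ
  have hJint : Integrable J μ := hsqc.integral_prod_left
  have hae : ∀ᵐ η ∂μ, (Pop μ I h η) ^ 2 ≤ J η := by
    filter_upwards [hsqc.prod_right_ae] with η hη
    have hmem : MemLp (fun ζ => h (Cc I η ζ)) 2 μ :=
      (memLp_two_iff_integrable_sq
        ((hm.comp (measurable_Cc_right I η)).aestronglyMeasurable)).mpr hη
    exact jensen_sq hmem
  have hmeas : StronglyMeasurable (Pop μ I h) := stronglyMeasurable_Pop hm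
  have hint2 : Integrable (fun η => (Pop μ I h η) ^ 2) μ := by
    refine Integrable.mono' hJint ((hmeas.measurable.pow_const 2).aestronglyMeasurable) ?_
    filter_upwards [hae] with η hη
    rw [Real.norm_eq_abs, abs_of_nonneg (sq_nonneg _)]
    exact hη
  refine ⟨(memLp_two_iff_integrable_sq hmeas.aestronglyMeasurable).mpr hint2, ?_⟩
  calc ∫ η, (Pop μ I h η) ^ 2 ∂μ ≤ ∫ η, J η ∂μ := integral_mono_ae hint2 hJint hae
  _ = ∫ p : (ℤ → X) × (ℤ → X), h (Cc I p.1 p.2) ^ 2 ∂(μ.prod μ) := (integral_prod _ hsqc).symm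
  _ = ∫ η, h η ^ 2 ∂μ := by
      have hms : AEStronglyMeasurable (fun η : ℤ → X => h η ^ 2)
          ((μ.prod μ).map (fun p : (ℤ → X) × (ℤ → X) => Cc I p.1 p.2)) := by
        rw [map_combine hμ I]; exact (hm.pow_const 2).aestronglyMeasurable
      have := integral_map (measurable_Cc I).aemeasurable hms
      rw [map_combine hμ I] at this
      exact this.symm

/-- self-adjointness of `Pop`. -/
lemma Pop_selfadj (hμ : IsIIDProduct ν μ) (I : Set ℤ) {h u : (ℤ → X) → ℝ}
    (hm : Measurable h) (h2 : MemLp h 2 μ) (hum : Measurable u) (hu2 : MemLp u 2 μ) :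
    ∫ η, Pop μ I h η * u η ∂μ = ∫ η, Pop μ I h η * Pop μ I u η ∂μ := by
  have hPm : StronglyMeasurable (Pop μ I h) := stronglyMeasurable_Pop hm
  have hP2 : MemLp (Pop μ I h) 2 μ := (Pop_L2 hμ I hm h2).1
  have hΦint : Integrable (fun η => Pop μ I h η * u η) μ := integrable_mul_of_L2 hP2 hu2
  have hΦm : AEStronglyMeasurable (fun η => Pop μ I h η * u η) μ :=
    (hPm.measurable.mul hum).aestronglyMeasurable
  have hcomp : Integrable
      (fun p : (ℤ → X) × (ℤ → X) => Pop μ I h (Cc I p.1 p.2) * u (Cc I p.1 p.2)) (μ.prod μ) :=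
    integrable_comp_combine hμ I hΦm hΦint
  have hkey : ∀ p : (ℤ → X) × (ℤ → X), Pop μ I h (Cc I p.1 p.2) = Pop μ I h p.1 :=
    fun p => DOn_Pop I h _ _ Cc_agree
  calc ∫ η, Pop μ I h η * u η ∂μ
      = ∫ p : (ℤ → X) × (ℤ → X), Pop μ I h (Cc I p.1 p.2) * u (Cc I p.1 p.2) ∂(μ.prod μ) := by
        have hms : AEStronglyMeasurable (fun η => Pop μ I h η * u η)
            ((μ.prod μ).map (fun p : (ℤ → X) × (ℤ → X) => Cc I p.1 p.2)) := by
          rw [map_combine hμ I]; exact hΦm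
        have := integral_map (measurable_Cc I).aemeasurable hms
        rw [map_combine hμ I] at this
        exact this
  _ = ∫ p : (ℤ → X) × (ℤ → X), Pop μ I h p.1 * u (Cc I p.1 p.2) ∂(μ.prod μ) := by
        congr 1; funext p; rw [hkey p]
  _ = ∫ η, ∫ ζ, Pop μ I h η * u (Cc I η ζ) ∂μ ∂μ := by
        refine integral_prod _ ?_
        have : (fun p : (ℤ → X) × (ℤ → X) => Pop μ I h p.1 * u (Cc I p.1 p.2)) =
            fun p => Pop μ I h (Cc I p.1 p.2) * u (Cc I p.1 p.2) := by
          funext p; rw [hkey p]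
        rw [this]; exact hcomp
  _ = ∫ η, Pop μ I h η * Pop μ I u η ∂μ := by
        congr 1; funext η
        rw [integral_const_mul]
        rfl

lemma measurePreserving_Tsh (hμ : IsIIDProduct ν μ) (z : ℤ) :
    MeasurePreserving (Tsh z : (ℤ → X) → ℤ → X) μ μ :=
  ⟨measurable_Tsh z, map_shift hμ z⟩

lemma integral_shift (hμ : IsIIDProduct ν μ) {h : (ℤ → X) → ℝ}
    (hs : AEStronglyMeasurable h μ) (z : ℤ) :
    ∫ η, h (Tsh z η) ∂μ = ∫ η, h η ∂μ := by
  have hs' : AEStronglyMeasurable h (μ.map (Tsh z : (ℤ → X) → ℤ → X)) := by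
    rw [map_shift hμ z]; exact hs
  have := integral_map (measurable_Tsh z).aemeasurable hs'
  rw [map_shift hμ z] at this
  exact this.symm

lemma memLp_shift (hμ : IsIIDProduct ν μ) {h : (ℤ → X) → ℝ} (h2 : MemLp h 2 μ) (z : ℤ) :
    MemLp (fun η => h (Tsh z η)) 2 μ :=
  h2.comp_measurePreserving (measurePreserving_Tsh hμ z)

lemma Pop_shiftrule {c : ℤ} {h : (ℤ → X) → ℝ} (hm : Measurable h) (η : ℤ → X)
    (hμ : IsIIDProduct ν μ) :
    Pop μ {x : ℤ | x ≤ c} h (Tsh 1 η) = Pop μ {x : ℤ | x ≤ c + 1} (fun ξ => h (Tsh 1 ξ)) η := by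
  have key : ∀ ζ : ℤ → X, Tsh 1 (Cc {x : ℤ | x ≤ c + 1} η ζ) =
      Cc {x : ℤ | x ≤ c} (Tsh 1 η) (Tsh 1 ζ) := by
    intro ζ; funext x
    by_cases hx : x ≤ c
    · rw [Tsh, Cc_mem (show x + 1 ∈ {x : ℤ | x ≤ c + 1} by simp; omega),
        Cc_mem (show x ∈ {x : ℤ | x ≤ c} from hx)]
      rfl
    · rw [Tsh, Cc_not_mem (show x + 1 ∉ {x : ℤ | x ≤ c + 1} by simp; omega),
        Cc_not_mem (show x ∉ {x : ℤ | x ≤ c} from hx)]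
      rfl
  show _ = ∫ ζ, h (Tsh 1 (Cc {x : ℤ | x ≤ c + 1} η ζ)) ∂μ
  simp only [key]
  exact (integral_shift hμ
    ((hm.comp (measurable_Cc_right _ (Tsh 1 η))).aestronglyMeasurable) 1).symm

/-- adjoint formula. -/
lemma Pop_adj (hμ : IsIIDProduct ν μ) (I : Set ℤ) {h u : (ℤ → X) → ℝ}
    (hm : Measurable h) (h2 : MemLp h 2 μ) (hum : Measurable u) (hu2 : MemLp u 2 μ) :
    ∫ η, Pop μ I h η * u η ∂μ = ∫ η, h η * Pop μ I u η ∂μ := by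
  rw [Pop_selfadj hμ I hm h2 hum hu2]
  have h1 := Pop_selfadj hμ I hum hu2 hm h2
  have e1 : ∫ η, Pop μ I u η * h η ∂μ = ∫ η, h η * Pop μ I u η ∂μ := by
    congr 1; funext η; ring
  have e2 : ∫ η, Pop μ I u η * Pop μ I h η ∂μ = ∫ η, Pop μ I h η * Pop μ I u η ∂μ := by
    congr 1; funext η; ring
  rw [e1, e2] at h1
  exact h1.symm

lemma integral_Pop (hμ : IsIIDProduct ν μ) (I : Set ℤ) {h : (ℤ → X) → ℝ}
    (hm : Measurable h) (h2 : MemLp h 2 μ) :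
    ∫ η, Pop μ I h η ∂μ = ∫ η, h η ∂μ := by
  have h1 : MemLp (fun _ : ℤ → X => (1:ℝ)) 2 μ := memLp_const 1
  have := Pop_adj hμ I hm h2 measurable_const h1
  have hP1 : Pop μ I (fun _ : ℤ → X => (1:ℝ)) = fun _ => (1:ℝ) :=
    Pop_eq_self (fun _ _ _ => rfl)
  rw [hP1] at this
  simpa using this

lemma int_mul_le {α : Type*} [MeasurableSpace α] {m : Measure α}
    {u v : α → ℝ} (hu : MemLp u 2 m) (hv : MemLp v 2 m) :
    ∫ x, u x * v x ∂m ≤ ((∫ x, u x ^ 2 ∂m) + ∫ x, v x ^ 2 ∂m) / 2 := by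
  have hu2 : Integrable (fun x => u x ^ 2) m := (memLp_two_iff_integrable_sq hu.1).mp hu
  have hv2 : Integrable (fun x => v x ^ 2) m := (memLp_two_iff_integrable_sq hv.1).mp hv
  have huv : Integrable (fun x => u x * v x) m := integrable_mul_of_L2 hu hv
  have h0 : (0:ℝ) ≤ ∫ x, (u x - v x) ^ 2 ∂m := integral_nonneg fun x => sq_nonneg _
  have hexp : ∫ x, (u x - v x) ^ 2 ∂m =
      (∫ x, u x ^ 2 ∂m) - 2 * ∫ x, u x * v x ∂m + ∫ x, v x ^ 2 ∂m := by
    have h1 : (fun x => (u x - v x) ^ 2) =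
        fun x => (u x ^ 2 - 2 * (u x * v x)) + v x ^ 2 := by
      funext x; ring
    have i1 : Integrable (fun x => u x ^ 2 - 2 * (u x * v x)) m :=
      hu2.sub (huv.const_mul 2)
    rw [h1, integral_add i1 hv2, integral_sub hu2 (huv.const_mul 2), integral_const_mul]
  linarith [hexp ▸ h0]

lemma DOn.mono {h : (ℤ → X) → ℝ} {D D' : Set ℤ} (hD : DOn h D) (hsub : D ⊆ D') :
    DOn h D' :=
  fun _ _ hag => hD _ _ fun x hx => hag x (hsub hx)

lemma DOn_Pop_of {I D : Set ℤ} {h : (ℤ → X) → ℝ} (hD : DOn h D) : DOn (Pop μ I h) D := by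
  intro η η' hag
  simp only [Pop]
  congr 1
  funext ζ
  refine hD _ _ fun x hx => ?_
  by_cases hxI : x ∈ I
  · rw [Cc_mem hxI, Cc_mem hxI]; exact hag x hx
  · rw [Cc_not_mem hxI, Cc_not_mem hxI]

theorem key (hμ : IsIIDProduct ν μ) (s : ℕ) (f : (ℤ → X) → ℝ) (hmf : Measurable f)
    (hloc : DependsOnWindow s f) (hL : MemLp f 2 μ)
    (hmean : ∫ η, f η ∂μ = 0)
    (hker : ∑ᶠ z : ℤ, ∫ η, f η * f (fun x => η (x + z)) ∂μ = 0) :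
    ∃ g : (ℤ → X) → ℝ, IsLocal g ∧ MemLp g 2 μ ∧ (∫ η, g η ∂μ = 0) ∧
      (f =ᵐ[μ] fun η => g (fun x => η (x + 1)) - g η) ∧
      ∫ η, (g η) ^ 2 ∂μ ≤ (2 * (s : ℝ) + 1) ^ 2 * ∫ η, (f η) ^ 2 ∂μ := by
  classical
  set W : Set ℤ := Set.Icc (-(s:ℤ)) s with hW
  set L : Set ℤ := {x : ℤ | x ≤ (s:ℤ)} with hLdef
  set L' : Set ℤ := {x : ℤ | x ≤ (s:ℤ) + 1} with hL'def
  set fk : ℤ → (ℤ → X) → ℝ := fun z η => f (Tsh z η) with hfkdef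
  set D : ℤ → Set ℤ := fun z => Set.Icc (z - s) (z + s) with hDdef
  set P : ℤ → (ℤ → X) → ℝ := fun z => Pop μ L (fk z) with hPdef
  set Q : ℤ → (ℤ → X) → ℝ := fun z => Pop μ L' (fk z) with hQdef
  set a : ℤ → ℝ := fun z => ∫ η, f η * f (Tsh z η) ∂μ with hadef
  set t : ℤ → ℤ → ℝ := fun j k => ∫ η, P j η * fk k η ∂μ with htdef
  set K : ℤ := 2 * (s:ℤ) with hKdef
  set N : ℤ := 4 * (s:ℤ) + 2 with hNdef
  -- basic facts
  have hWf : DOn f W := by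
    intro η η' hag
    exact hloc η η' fun x hx => hag x (by simp only [hW, Set.mem_Icc]; exact abs_le.mp hx)
  have hfk0 : fk 0 = f := by
    funext η
    show f (Tsh 0 η) = f η
    congr 1
    funext x
    simp [Tsh]
  have hfkm : ∀ z, Measurable (fk z) := fun z => hmf.comp (measurable_Tsh z)
  have hfk2 : ∀ z, MemLp (fk z) 2 μ := fun z => memLp_shift hμ hL z
  have hfkD : ∀ z, DOn (fk z) (D z) := by
    intro z η η' hag
    refine hloc _ _ fun x hx => ?_
    have h1 := abs_le.mp hx
    exact hag (x + z) (by simp only [hDdef, Set.mem_Icc]; omega)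
  have hfk_int : ∀ z, ∫ η, fk z η ∂μ = 0 := fun z => by
    rw [show (fun η => fk z η) = fun η => f (Tsh z η) from rfl, integral_shift hμ hL.1 z, hmean]
  have hfksq_int : ∀ z, ∫ η, fk z η ^ 2 ∂μ = ∫ η, f η ^ 2 ∂μ := fun z =>
    integral_shift hμ ((hmf.pow_const 2).aestronglyMeasurable) z
  have hPm : ∀ z, Measurable (P z) := fun z => (stronglyMeasurable_Pop (hfkm z)).measurable
  have hQm : ∀ z, Measurable (Q z) := fun z => (stronglyMeasurable_Pop (hfkm z)).measurable
  have hP2 : ∀ z, MemLp (P z) 2 μ := fun z => (Pop_L2 hμ L (hfkm z) (hfk2 z)).1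
  have hQ2 : ∀ z, MemLp (Q z) 2 μ := fun z => (Pop_L2 hμ L' (hfkm z) (hfk2 z)).1
  have hPsq : ∀ z, ∫ η, P z η ^ 2 ∂μ ≤ ∫ η, f η ^ 2 ∂μ := fun z =>
    le_trans (Pop_L2 hμ L (hfkm z) (hfk2 z)).2 (le_of_eq (hfksq_int z))
  have hPz : ∀ z : ℤ, K < z → P z = fun _ => 0 := by
    intro z hz
    have : Pop μ L (fk z) = fun _ => ∫ ζ, fk z ζ ∂μ := by
      refine Pop_vanish (hfkD z) ?_
      ext x
      simp only [hLdef, hDdef, Set.mem_inter_iff, Set.mem_setOf_eq, Set.mem_Icc,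
        Set.mem_empty_iff_false, iff_false, not_and]
      intro h1 h2
      omega
    rw [hPdef]
    simp only [this, hfk_int z]
  have hQP : ∀ (z : ℤ) (η : ℤ → X), Q z η = P (z - 1) (Tsh 1 η) := by
    intro z η
    have hrule := Pop_shiftrule (c := (s:ℤ)) (hfkm (z-1)) η hμ
    have hcomp : (fun ξ => fk (z-1) (Tsh 1 ξ)) = fk z := by
      funext ξ
      show f (Tsh (z-1) (Tsh 1 ξ)) = f (Tsh z ξ)
      congr 1
      funext x
      show ξ (x + (z - 1) + 1) = ξ (x + z)
      congr 1
      ring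
    rw [hcomp] at hrule
    exact hrule.symm
  have hQz : ∀ z : ℤ, K + 1 < z → Q z = fun _ => 0 := by
    intro z hz
    funext η
    rw [hQP z η, hPz (z - 1) (by omega)]
  have hfLL : DOn f L := by
    refine hWf.mono ?_
    intro x hx
    simp only [hW, Set.mem_Icc] at hx
    simp only [hLdef, Set.mem_setOf_eq]
    omega
  have hP0 : P 0 = f := by
    rw [hPdef]
    simp only [hfk0]
    exact Pop_eq_self hfLL
  have hLL' : L ⊆ L' := by
    intro x hx
    simp only [hLdef, Set.mem_setOf_eq] at hx
    simp only [hL'def, Set.mem_setOf_eq]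
    omega
  have hQPop : ∀ j : ℤ, Pop μ L' (P j) = P j := fun j =>
    Pop_eq_self ((DOn_Pop L (fk j)).mono hLL')
  have e_PP : ∀ j k : ℤ, ∫ η, P j η * P k η ∂μ = t j k := by
    intro j k
    exact (Pop_selfadj hμ L (hfkm j) (hfk2 j) (hfkm k) (hfk2 k)).symm
  have e_PQ : ∀ j k : ℤ, ∫ η, P j η * Q k η ∂μ = t j k := by
    intro j k
    have hadj := Pop_adj hμ L' (hfkm k) (hfk2 k) (hPm j) (hP2 j)
    rw [hQPop j] at hadj
    calc ∫ η, P j η * Q k η ∂μ = ∫ η, Q k η * P j η ∂μ := by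
          congr 1; funext η; ring
    _ = ∫ η, fk k η * P j η ∂μ := hadj
    _ = t j k := by rw [htdef]; congr 1; funext η; ring
  have e_QP : ∀ j k : ℤ, ∫ η, Q j η * P k η ∂μ = t k j := by
    intro j k
    have hadj := Pop_adj hμ L' (hfkm j) (hfk2 j) (hPm k) (hP2 k)
    rw [hQPop k] at hadj
    calc ∫ η, Q j η * P k η ∂μ = ∫ η, fk j η * P k η ∂μ := hadj
    _ = t k j := by rw [htdef]; congr 1; funext η; ring
  have hfk_sh : ∀ (k : ℤ) (η : ℤ → X), fk k η = fk (k-1) (Tsh 1 η) := by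
    intro k η
    show f (Tsh k η) = f (Tsh (k-1) (Tsh 1 η))
    congr 1
    funext x
    show η (x + k) = η (x + (k - 1) + 1)
    congr 1
    ring
  have e_QQ : ∀ j k : ℤ, ∫ η, Q j η * Q k η ∂μ = t (j-1) (k-1) := by
    intro j k
    have h1 := (Pop_selfadj hμ L' (hfkm j) (hfk2 j) (hfkm k) (hfk2 k)).symm
    calc ∫ η, Q j η * Q k η ∂μ = ∫ η, Q j η * fk k η ∂μ := h1
    _ = ∫ η, P (j-1) (Tsh 1 η) * fk (k-1) (Tsh 1 η) ∂μ := by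
          congr 1; funext η; rw [hQP j η, hfk_sh k η]
    _ = ∫ η, P (j-1) η * fk (k-1) η ∂μ :=
          integral_shift hμ ((hPm (j-1)).mul (hfkm (k-1))).aestronglyMeasurable 1
    _ = t (j-1) (k-1) := rfl
  have ht0 : ∀ j k : ℤ, K < j → t j k = 0 := by
    intro j k hj
    have : t j k = ∫ η, P j η * fk k η ∂μ := rfl
    rw [this, hPz j hj]
    simp
  have ht_sep : ∀ j k : ℤ, K < |j - k| → t j k = 0 := by
    intro j k hjk
    have hsep : j - k > K ∨ k - j > K := by
      rcases abs_cases (j - k) with ⟨h1, h2⟩ | ⟨h1, h2⟩ <;> omega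
    have hvan : Pop μ (D j) (fk k) = fun _ => ∫ ζ, fk k ζ ∂μ := by
      refine Pop_vanish (hfkD k) ?_
      ext x
      simp only [hDdef, Set.mem_inter_iff, Set.mem_Icc, Set.mem_empty_iff_false,
        iff_false, not_and]
      intro h1 h2 h3
      omega
    have hadj := Pop_adj hμ (D j) (hPm j) (hP2 j) (hfkm k) (hfk2 k)
    rw [Pop_eq_self (DOn_Pop_of (hfkD j)), hvan] at hadj
    have : t j k = ∫ η, P j η * fk k η ∂μ := rfl
    rw [this, hadj, hfk_int k]
    simp
  have ht_j0 : ∀ j : ℤ, t j 0 = a j := by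
    intro j
    have hadj := Pop_adj hμ L (hfkm j) (hfk2 j) hmf hL
    rw [Pop_eq_self hfLL] at hadj
    calc t j 0 = ∫ η, P j η * f η ∂μ := by
          show (∫ η, P j η * fk 0 η ∂μ) = _
          rw [hfk0]
    _ = ∫ η, fk j η * f η ∂μ := hadj
    _ = a j := by rw [hadef]; congr 1; funext η; show fk j η * f η = f η * f (Tsh j η); exact mul_comm _ _
  have ht_0k : ∀ k : ℤ, t 0 k = a k := by
    intro k
    have : t 0 k = ∫ η, P 0 η * fk k η ∂μ := rfl
    rw [this, hP0]
  have ha_neg : ∀ z : ℤ, a (-z) = a z := by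
    intro z
    have hmeasz : AEStronglyMeasurable (fun η => f η * f (Tsh (-z) η)) μ :=
      (hmf.mul (hmf.comp (measurable_Tsh (-z)))).aestronglyMeasurable
    have h1 := (integral_shift hμ hmeasz z).symm
    have h2 : ∀ η : ℤ → X, Tsh (-z) (Tsh z η) = η := by
      intro η; funext x
      show η (x + -z + z) = η x
      congr 1; ring
    calc a (-z) = ∫ η, f (Tsh z η) * f (Tsh (-z) (Tsh z η)) ∂μ := h1
    _ = ∫ η, f η * f (Tsh z η) ∂μ := by
          congr 1; funext η; rw [h2 η]; ring
    _ = a z := rfl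
  have ha_van : ∀ z : ℤ, K < |z| → a z = 0 := by
    intro z hz
    have hsep : z > K ∨ -z > K := by
      rcases abs_cases z with ⟨h1, h2⟩ | ⟨h1, h2⟩ <;> omega
    have hvan : Pop μ W (fk z) = fun _ => ∫ ζ, fk z ζ ∂μ := by
      refine Pop_vanish (hfkD z) ?_
      ext x
      simp only [hW, hDdef, Set.mem_inter_iff, Set.mem_Icc, Set.mem_empty_iff_false,
        iff_false, not_and]
      intro h1 h2 h3
      omega
    have hadj := Pop_adj hμ W hmf hL (hfkm z) (hfk2 z)
    rw [Pop_eq_self hWf, hvan] at hadj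
    have : a z = ∫ η, f η * fk z η ∂μ := rfl
    rw [this, hadj, hfk_int z]
    simp
  have hker2 : ∑ᶠ z : ℤ, a z = 0 := hker
  -- the gradient function and the remainder
  set g : (ℤ → X) → ℝ := fun η => -∑ k ∈ Finset.Icc (0:ℤ) K, P k η with hgdef
  set R : (ℤ → X) → ℝ := fun η => ∑ k ∈ Finset.Icc (1:ℤ) N, (P k η - Q k η) with hRdef
  have hg2 : MemLp g 2 μ := by
    have h1 : MemLp (fun η => ∑ k ∈ Finset.Icc (0:ℤ) K, P k η) 2 μ :=
      memLp_finset_sum _ (fun k _ => hP2 k)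
    exact h1.neg
  have hgint0 : ∫ η, g η ∂μ = 0 := by
    have h1 : ∀ k ∈ Finset.Icc (0:ℤ) K, Integrable (P k) μ :=
      fun k _ => (hP2 k).integrable one_le_two
    simp only [hgdef]
    rw [integral_neg, integral_finset_sum _ h1]
    have h2 : ∀ k ∈ Finset.Icc (0:ℤ) K, ∫ η, P k η ∂μ = 0 := by
      intro k _
      rw [hPdef]
      rw [integral_Pop hμ L (hfkm k) (hfk2 k), hfk_int k]
    rw [Finset.sum_congr rfl h2]
    simp
  have hsnn : (0:ℤ) ≤ K := by omega
  have hgR : ∀ η, g (Tsh 1 η) - g η - f η = R η := by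
    intro η
    have h1 : ∑ k ∈ Finset.Icc (0:ℤ) K, P k (Tsh 1 η) =
        ∑ k ∈ Finset.Icc (1:ℤ) (K+1), Q k η := by
      rw [show Finset.Icc (1:ℤ) (K+1) = (Finset.Icc (0:ℤ) K).map (addRightEmbedding 1) by
        rw [Finset.map_add_right_Icc]; norm_num]
      rw [Finset.sum_map]
      refine Finset.sum_congr rfl fun k _ => ?_
      show P k (Tsh 1 η) = Q (k + 1) η
      rw [hQP (k+1) η]
      norm_num
    have h2 : ∑ k ∈ Finset.Icc (1:ℤ) N, Q k η = ∑ k ∈ Finset.Icc (1:ℤ) (K+1), Q k η := by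
      symm
      refine Finset.sum_subset ?_ ?_
      · intro x hx
        simp only [Finset.mem_Icc] at hx ⊢
        omega
      · intro x hx hnx
        simp only [Finset.mem_Icc] at hx hnx
        rw [hQz x (by omega)]
    have h3 : ∑ k ∈ Finset.Icc (1:ℤ) N, P k η = ∑ k ∈ Finset.Icc (1:ℤ) K, P k η := by
      symm
      refine Finset.sum_subset ?_ ?_
      · intro x hx
        simp only [Finset.mem_Icc] at hx ⊢
        omega
      · intro x hx hnx
        simp only [Finset.mem_Icc] at hx hnx
        rw [hPz x (by omega)]
    have h4 : ∑ k ∈ Finset.Icc (0:ℤ) K, P k η = f η + ∑ k ∈ Finset.Icc (1:ℤ) K, P k η := by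
      have h0K : (0:ℤ) ∈ Finset.Icc (0:ℤ) K := by
        simp only [Finset.mem_Icc]
        omega
      rw [← Finset.add_sum_erase _ _ h0K, Finset.Icc_erase_left]
      have : Finset.Ioc (0:ℤ) K = Finset.Icc (1:ℤ) K := by
        ext x
        simp only [Finset.mem_Ioc, Finset.mem_Icc]
        omega
      rw [this, hP0]
    have h5 : R η = (∑ k ∈ Finset.Icc (1:ℤ) N, P k η) -
        ∑ k ∈ Finset.Icc (1:ℤ) N, Q k η := by
      simp only [hRdef]
      rw [Finset.sum_sub_distrib]
    show (-∑ k ∈ Finset.Icc (0:ℤ) K, P k (Tsh 1 η)) - g η - f η = R η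
    simp only [hgdef]
    rw [h5, h1, h2, h3]
    linarith [h4]
  have hu2 : ∀ k : ℤ, MemLp (fun η => P k η - Q k η) 2 μ := fun k => (hP2 k).sub (hQ2 k)
  have hR2 : MemLp R 2 μ := memLp_finset_sum _ (fun k _ => hu2 k)
  have hterm : ∀ j k : ℤ, ∫ η, (P j η - Q j η) * (P k η - Q k η) ∂μ =
      t (j-1) (k-1) - t k j := by
    intro j k
    have iPP := integrable_mul_of_L2 (hP2 j) (hP2 k)
    have iPQ := integrable_mul_of_L2 (hP2 j) (hQ2 k)
    have iQP := integrable_mul_of_L2 (hQ2 j) (hP2 k)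
    have iQQ := integrable_mul_of_L2 (hQ2 j) (hQ2 k)
    have i1 : Integrable (fun η => P j η * P k η - P j η * Q k η) μ := iPP.sub iPQ
    have i2 : Integrable (fun η => (P j η * P k η - P j η * Q k η) - Q j η * P k η) μ :=
      i1.sub iQP
    have hexpand : (fun η => (P j η - Q j η) * (P k η - Q k η)) =
        fun η => ((P j η * P k η - P j η * Q k η) - Q j η * P k η) + Q j η * Q k η := by
      funext η; ring
    rw [hexpand, integral_add i2 iQQ, integral_sub i1 iQP, integral_sub iPP iPQ,
      e_PP, e_PQ, e_QP, e_QQ]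
    ring
  have hRsq : ∫ η, R η ^ 2 ∂μ = ∑ j ∈ Finset.Icc (1:ℤ) N, ∑ k ∈ Finset.Icc (1:ℤ) N,
      (t (j-1) (k-1) - t k j) := by
    have hsq : (fun η => R η ^ 2) = fun η => ∑ j ∈ Finset.Icc (1:ℤ) N,
        ∑ k ∈ Finset.Icc (1:ℤ) N, (P j η - Q j η) * (P k η - Q k η) := by
      funext η
      simp only [hRdef]
      rw [sq, Finset.sum_mul_sum]
    rw [hsq, integral_finset_sum _ (fun j _ => integrable_finset_sum _
      (fun k _ => integrable_mul_of_L2 (hu2 j) (hu2 k)))]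
    refine Finset.sum_congr rfl fun j _ => ?_
    rw [integral_finset_sum _ (fun k _ => integrable_mul_of_L2 (hu2 j) (hu2 k))]
    exact Finset.sum_congr rfl fun k _ => hterm j k
  -- the combinatorial identity
  have reidx : ∀ (h : ℤ → ℝ), ∑ j ∈ Finset.Icc (1:ℤ) N, h (j - 1) =
      ∑ j ∈ Finset.Icc (0:ℤ) (N-1), h j := by
    intro h
    rw [show Finset.Icc (1:ℤ) N = (Finset.Icc (0:ℤ) (N-1)).map (addRightEmbedding 1) by
      rw [Finset.map_add_right_Icc]; norm_num]
    rw [Finset.sum_map]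
    refine Finset.sum_congr rfl fun j _ => ?_
    simp [addRightEmbedding]
  have hA : ∑ j ∈ Finset.Icc (1:ℤ) N, ∑ k ∈ Finset.Icc (1:ℤ) N, t (j-1) (k-1) =
      ∑ j ∈ Finset.Icc (0:ℤ) (N-1), ∑ k ∈ Finset.Icc (0:ℤ) (N-1), t j k := by
    rw [reidx (fun j => ∑ k ∈ Finset.Icc (1:ℤ) N, t j (k-1))]
    exact Finset.sum_congr rfl fun j _ => reidx (fun k => t j k)
  have hswap : ∑ j ∈ Finset.Icc (1:ℤ) N, ∑ k ∈ Finset.Icc (1:ℤ) N, t k j =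
      ∑ j ∈ Finset.Icc (1:ℤ) N, ∑ k ∈ Finset.Icc (1:ℤ) N, t j k := Finset.sum_comm
  have hprodA : ∑ j ∈ Finset.Icc (0:ℤ) (N-1), ∑ k ∈ Finset.Icc (0:ℤ) (N-1), t j k =
      ∑ p ∈ Finset.Icc (0:ℤ) (N-1) ×ˢ Finset.Icc (0:ℤ) (N-1), t p.1 p.2 :=
    (Finset.sum_product' _ _ _).symm
  have hprodB : ∑ j ∈ Finset.Icc (1:ℤ) N, ∑ k ∈ Finset.Icc (1:ℤ) N, t j k =
      ∑ p ∈ Finset.Icc (1:ℤ) N ×ˢ Finset.Icc (1:ℤ) N, t p.1 p.2 :=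
    (Finset.sum_product' _ _ _).symm
  have hdiffB : ∑ p ∈ (Finset.Icc (1:ℤ) N ×ˢ Finset.Icc (1:ℤ) N) \
      (Finset.Icc (0:ℤ) (N-1) ×ˢ Finset.Icc (0:ℤ) (N-1)), t p.1 p.2 = 0 := by
    refine Finset.sum_eq_zero fun p hp => ?_
    simp only [Finset.mem_sdiff, Finset.mem_product, Finset.mem_Icc, not_and, not_le] at hp
    by_cases hK : K < p.1
    · exact ht0 _ _ hK
    · refine ht_sep _ _ ?_
      rcases abs_cases (p.1 - p.2) with ⟨h1, h2⟩ | ⟨h1, h2⟩ <;> omega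
  have hdiffA : ∑ p ∈ (Finset.Icc (0:ℤ) (N-1) ×ˢ Finset.Icc (0:ℤ) (N-1)) \
      (Finset.Icc (1:ℤ) N ×ˢ Finset.Icc (1:ℤ) N), t p.1 p.2 =
      (∑ k ∈ Finset.Icc (0:ℤ) (N-1), a k) + ∑ j ∈ Finset.Icc (1:ℤ) (N-1), a j := by
    have hsplit : (Finset.Icc (0:ℤ) (N-1) ×ˢ Finset.Icc (0:ℤ) (N-1)) \
        (Finset.Icc (1:ℤ) N ×ˢ Finset.Icc (1:ℤ) N) =
        (({(0:ℤ)} : Finset ℤ) ×ˢ Finset.Icc (0:ℤ) (N-1)) ∪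
        (Finset.Icc (1:ℤ) (N-1) ×ˢ ({(0:ℤ)} : Finset ℤ)) := by
      ext p
      simp only [Finset.mem_sdiff, Finset.mem_product, Finset.mem_Icc, Finset.mem_union,
        Finset.mem_singleton, not_and, not_le]
      omega
    have hdisj : Disjoint (({(0:ℤ)} : Finset ℤ) ×ˢ Finset.Icc (0:ℤ) (N-1))
        (Finset.Icc (1:ℤ) (N-1) ×ˢ ({(0:ℤ)} : Finset ℤ)) := by
      rw [Finset.disjoint_left]
      intro p hp1 hp2
      simp only [Finset.mem_product, Finset.mem_singleton, Finset.mem_Icc] at hp1 hp2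
      omega
    rw [hsplit, Finset.sum_union hdisj]
    congr 1
    · rw [Finset.sum_product, Finset.sum_singleton]
      exact Finset.sum_congr rfl fun k _ => ht_0k k
    · rw [Finset.sum_product]
      refine Finset.sum_congr rfl fun j _ => ?_
      rw [Finset.sum_singleton]
      exact ht_j0 j
  have hFsum : (∑ k ∈ Finset.Icc (0:ℤ) (N-1), a k) +
      (∑ j ∈ Finset.Icc (1:ℤ) (N-1), a j) = 0 := by
    have hsupp : Function.support a ⊆ ↑(Finset.Icc (-(N-1)) (N-1)) := by
      intro z hz
      simp only [Finset.coe_Icc, Set.mem_Icc]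
      constructor <;> by_contra hc <;> push_neg at hc <;>
        exact hz (ha_van z (by rcases abs_cases z with ⟨h1, h2⟩ | ⟨h1, h2⟩ <;> omega))
    have h0 : ∑ z ∈ Finset.Icc (-(N-1)) (N-1), a z = 0 := by
      rw [← finsum_eq_finset_sum_of_support_subset a hsupp]
      exact hker2
    have hsplit2 : Finset.Icc (-(N-1)) (N-1) =
        Finset.Icc (-(N-1)) (-1) ∪ Finset.Icc (0:ℤ) (N-1) := by
      ext x
      simp only [Finset.mem_Icc, Finset.mem_union]
      omega
    have hdisj2 : Disjoint (Finset.Icc (-(N-1)) (-1)) (Finset.Icc (0:ℤ) (N-1)) := by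
      rw [Finset.disjoint_left]
      intro x hx1 hx2
      simp only [Finset.mem_Icc] at hx1 hx2
      omega
    rw [hsplit2, Finset.sum_union hdisj2] at h0
    have hrefl : ∑ z ∈ Finset.Icc (-(N-1)) (-1), a z =
        ∑ j ∈ Finset.Icc (1:ℤ) (N-1), a j := by
      refine Finset.sum_bij' (fun z _ => -z) (fun z _ => -z) ?_ ?_ ?_ ?_ ?_
      · intro z hzmem
        simp only [Finset.mem_Icc] at hzmem ⊢
        omega
      · intro z hzmem
        simp only [Finset.mem_Icc] at hzmem ⊢
        omega
      · intro z _; ring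
      · intro z _; ring
      · intro z _
        exact (ha_neg z).symm
    linarith [h0, hrefl]
  have hAB : ∑ j ∈ Finset.Icc (1:ℤ) N, ∑ k ∈ Finset.Icc (1:ℤ) N,
      (t (j-1) (k-1) - t k j) = 0 := by
    have hd1 : ∑ j ∈ Finset.Icc (1:ℤ) N, ∑ k ∈ Finset.Icc (1:ℤ) N,
        (t (j-1) (k-1) - t k j) =
        (∑ j ∈ Finset.Icc (1:ℤ) N, ∑ k ∈ Finset.Icc (1:ℤ) N, t (j-1) (k-1)) -
        ∑ j ∈ Finset.Icc (1:ℤ) N, ∑ k ∈ Finset.Icc (1:ℤ) N, t k j := by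
      simp only [Finset.sum_sub_distrib]
    have e1 := Finset.sum_inter_add_sum_sdiff
      (Finset.Icc (0:ℤ) (N-1) ×ˢ Finset.Icc (0:ℤ) (N-1))
      (Finset.Icc (1:ℤ) N ×ˢ Finset.Icc (1:ℤ) N) (fun p => t p.1 p.2)
    have e2 := Finset.sum_inter_add_sum_sdiff
      (Finset.Icc (1:ℤ) N ×ˢ Finset.Icc (1:ℤ) N)
      (Finset.Icc (0:ℤ) (N-1) ×ˢ Finset.Icc (0:ℤ) (N-1)) (fun p => t p.1 p.2)
    rw [Finset.inter_comm] at e2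
    rw [hd1, hA, hswap, hprodA, hprodB]
    simp only at e1 e2 hdiffA hdiffB
    linarith [e1, e2, hdiffA, hdiffB, hFsum]
  have hRzero : ∫ η, R η ^ 2 ∂μ = 0 := by rw [hRsq, hAB]
  have hR0 : ∀ᵐ η ∂μ, R η = 0 := by
    have hRint2 : Integrable (fun η => R η ^ 2) μ :=
      (memLp_two_iff_integrable_sq hR2.1).mp hR2
    have hsq0 := (integral_eq_zero_iff_of_nonneg
      (fun η => sq_nonneg (R η)) hRint2).mp hRzero
    filter_upwards [hsq0] with η hη
    have h1 : R η ^ 2 = 0 := hη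
    exact (pow_eq_zero_iff (two_ne_zero)).mp h1
  have hcoc : f =ᵐ[μ] fun η => g (fun x => η (x + 1)) - g η := by
    filter_upwards [hR0] with η hη
    have h1 := hgR η
    rw [hη] at h1
    show f η = g (Tsh 1 η) - g η
    linarith
  have hlocg : IsLocal g := by
    refine ⟨Finset.Icc (-(s:ℤ)) s, fun η η' hag => ?_⟩
    simp only [hgdef]
    congr 1
    refine Finset.sum_congr rfl fun k hk => ?_
    simp only [Finset.mem_Icc] at hk
    show Pop μ L (fk k) η = Pop μ L (fk k) η'
    simp only [Pop]
    congr 1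
    funext ζ
    refine hfkD k _ _ fun x hx => ?_
    simp only [hDdef, Set.mem_Icc] at hx
    by_cases hxL : x ∈ L
    · rw [Cc_mem hxL, Cc_mem hxL]
      refine hag x ?_
      simp only [hLdef, Set.mem_setOf_eq] at hxL
      simp only [Finset.mem_Icc]
      omega
    · rw [Cc_not_mem hxL, Cc_not_mem hxL]
  have hgsq : (fun η => g η ^ 2) = fun η => ∑ j ∈ Finset.Icc (0:ℤ) K,
      ∑ k ∈ Finset.Icc (0:ℤ) K, P j η * P k η := by
    funext η
    simp only [hgdef]
    rw [neg_sq, sq, Finset.sum_mul_sum]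
  have hbound : ∫ η, g η ^ 2 ∂μ ≤ (2*(s:ℝ)+1)^2 * ∫ η, f η ^ 2 ∂μ := by
    have hcard : ((Finset.Icc (0:ℤ) K).card : ℝ) = 2*(s:ℝ)+1 := by
      rw [Int.card_Icc]
      have h1 : (K + 1 - 0).toNat = 2*s+1 := by omega
      rw [h1]
      push_cast
      ring
    rw [hgsq, integral_finset_sum _ (fun j _ => integrable_finset_sum _
      (fun k _ => integrable_mul_of_L2 (hP2 j) (hP2 k)))]
    calc ∑ j ∈ Finset.Icc (0:ℤ) K, ∫ η, ∑ k ∈ Finset.Icc (0:ℤ) K, P j η * P k η ∂μ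
        ≤ ∑ j ∈ Finset.Icc (0:ℤ) K, ∑ k ∈ Finset.Icc (0:ℤ) K, ∫ η, f η ^ 2 ∂μ := by
          refine Finset.sum_le_sum fun j _ => ?_
          rw [integral_finset_sum _ (fun k _ => integrable_mul_of_L2 (hP2 j) (hP2 k))]
          refine Finset.sum_le_sum fun k _ => ?_
          calc ∫ η, P j η * P k η ∂μ
              ≤ ((∫ η, P j η ^ 2 ∂μ) + ∫ η, P k η ^ 2 ∂μ) / 2 :=
                int_mul_le (hP2 j) (hP2 k)
          _ ≤ ∫ η, f η ^ 2 ∂μ := by linarith [hPsq j, hPsq k]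
    _ = ((Finset.Icc (0:ℤ) K).card : ℝ) *
          (((Finset.Icc (0:ℤ) K).card : ℝ) * ∫ η, f η ^ 2 ∂μ) := by
          simp only [Finset.sum_const, nsmul_eq_mul]
    _ ≤ (2*(s:ℝ)+1)^2 * ∫ η, f η ^ 2 ∂μ := by
          rw [hcard]
          exact le_of_eq (by ring)
  exact ⟨g, hlocg, hg2, hgint0, hcoc, hbound⟩

end Infra


/-- in the setting of the one-dimensional main theorem (`f` local
mean-zero, depending on coordinates in `{-s_f,…,s_f}`, with `∑_z ⟨f, τ_z f⟩ = 0`),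
the gradient representative `g` with `f = τg − g` can be chosen with the bound
`⟨g²⟩ ≤ (2 s_f + 1)² ⟨f²⟩`. -/
theorem stmt13 {X : Type*} [MeasurableSpace X] (ν : Measure X) [IsProbabilityMeasure ν]
    [TopologicalSpace.SeparableSpace (Lp ℝ 2 ν)]
    (μ : Measure (ℤ → X)) [IsProbabilityMeasure μ] (hμ : IsIIDProduct ν μ)
    (s : ℕ) (f : (ℤ → X) → ℝ) (hloc : DependsOnWindow s f) (hL : MemLp f 2 μ)
    (hmean : ∫ η, f η ∂μ = 0)
    (hker : ∑ᶠ z : ℤ, ∫ η, f η * f (fun x => η (x + z)) ∂μ = 0) :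
    ∃ g : (ℤ → X) → ℝ, IsLocal g ∧ MemLp g 2 μ ∧ (∫ η, g η ∂μ = 0) ∧
      (f =ᵐ[μ] fun η => g (fun x => η (x + 1)) - g η) ∧
      ∫ η, (g η) ^ 2 ∂μ ≤ (2 * (s : ℝ) + 1) ^ 2 * ∫ η, (f η) ^ 2 ∂μ := by
  classical
  set W : Set ℤ := Set.Icc (-(s:ℤ)) s with hW
  set f₀ : (ℤ → X) → ℝ := hL.1.mk f with hf0
  have hf0m : StronglyMeasurable f₀ := hL.1.stronglyMeasurable_mk
  have hff0 : f =ᵐ[μ] f₀ := hL.1.ae_eq_mk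
  have hmapc := map_combine hμ Wᶜ
  have hqmp : Measure.QuasiMeasurePreserving
      (fun p : (ℤ → X) × (ℤ → X) => Cc Wᶜ p.1 p.2) (μ.prod μ) μ := by
    refine ⟨measurable_Cc _, ?_⟩
    rw [hmapc]
  have hcomp : ((fun p : (ℤ → X) × (ℤ → X) => f (Cc Wᶜ p.1 p.2))) =ᵐ[μ.prod μ]
      (fun p => f₀ (Cc Wᶜ p.1 p.2)) := hqmp.ae_eq_comp hff0
  have hae2 := Measure.ae_ae_of_ae_prod hcomp
  haveI : (MeasureTheory.ae μ).NeBot := ae_neBot.mpr (IsProbabilityMeasure.ne_zero μ)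
  obtain ⟨η₀, hη₀⟩ := hae2.exists
  set f' : (ℤ → X) → ℝ := fun ζ => f₀ (Cc Wᶜ η₀ ζ) with hf'
  have hptw : ∀ ζ : ℤ → X, f (Cc Wᶜ η₀ ζ) = f ζ := by
    intro ζ
    refine hloc _ _ fun x hx => ?_
    have hxW : x ∈ W := by
      simp only [hW, Set.mem_Icc]
      exact abs_le.mp hx
    exact Cc_not_mem (by simpa using hxW)
  have hff' : f =ᵐ[μ] f' := by
    filter_upwards [hη₀] with ζ hζ
    rw [hf']
    show f ζ = f₀ (Cc Wᶜ η₀ ζ)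
    rw [← hζ, hptw ζ]
  have hmf' : Measurable f' := hf0m.measurable.comp (measurable_Cc_right Wᶜ η₀)
  have hloc' : DependsOnWindow s f' := by
    intro η η' hag
    rw [hf']
    show f₀ (Cc Wᶜ η₀ η) = f₀ (Cc Wᶜ η₀ η')
    congr 1
    funext x
    by_cases hx : x ∈ Wᶜ
    · rw [Cc_mem hx, Cc_mem hx]
    · rw [Cc_not_mem hx, Cc_not_mem hx]
      refine hag x ?_
      have hxW : x ∈ W := by simpa using hx
      simp only [hW, Set.mem_Icc] at hxW
      exact abs_le.mpr hxW
  have hL2' : MemLp f' 2 μ := hL.ae_eq hff'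
  have hmean' : ∫ η, f' η ∂μ = 0 := by
    rw [← integral_congr_ae hff']
    exact hmean
  have hker' : ∑ᶠ z : ℤ, ∫ η, f' η * f' (fun x => η (x + z)) ∂μ = 0 := by
    have hz : ∀ z : ℤ, ∫ η, f' η * f' (fun x => η (x + z)) ∂μ =
        ∫ η, f η * f (fun x => η (x + z)) ∂μ := by
      intro z
      refine integral_congr_ae ?_
      have hsh : (f' ∘ (Tsh z : (ℤ → X) → ℤ → X)) =ᵐ[μ] (f ∘ (Tsh z)) :=
        (measurePreserving_Tsh hμ z).quasiMeasurePreserving.ae_eq_comp hff'.symm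
      filter_upwards [hff', hsh] with η h1 h2
      show f' η * f' (Tsh z η) = f η * f (Tsh z η)
      have h2' : f' (Tsh z η) = f (Tsh z η) := h2
      rw [← h1, h2']
    rw [finsum_congr hz]
    exact hker
  obtain ⟨g, hg1, hg2, hg3, hg4, hg5⟩ := key hμ s f' hmf' hloc' hL2' hmean' hker'
  refine ⟨g, hg1, hg2, hg3, hff'.trans hg4, ?_⟩
  have hsq : ∫ η, f' η ^ 2 ∂μ = ∫ η, f η ^ 2 ∂μ := by
    refine integral_congr_ae ?_
    filter_upwards [hff'] with η h
    rw [h]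
  rw [← hsq]
  exact hg5
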